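/- Let $a,b,c,d\in\mathbb{R}$ with $1\le a\le b$ and $0<\delta\le 1/2$. Then the Lebesgue measure of $E(\delta)=\{x\in[0,1]:\|ax+c\|\cdot\|bx+d\|<\delta^2\}$ satisfies $\lambda(E(\delta))\le C(\delta^2 L\log(1/\delta)+(a/b)^{1/2}\delta L)$ for an absolute constant $C$, where $L=\max\{1,\frac{\log b}{a}\}$. -/

import Mathlib

open Set MeasureTheory

/-- Distance from `x` to the nearest integer. -/
noncomputable def nint (x : ℝ) : ℝ := |x - round x|

/-- `log` with the convention that `log x = 1` for `x ≤ e`. -/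
noncomputable def clog (x : ℝ) : ℝ := max 1 (Real.log x)

lemma lemA (b d u v ε : ℝ) (hb : 0 < b) (hε : 0 < ε) (huv : u ≤ v) :
    volume {x ∈ Icc u v | nint (b*x+d) < ε}
      ≤ ENNReal.ofReal ((b*(v-u)+2*ε+1) * (2*ε/b)) := by
  set F : Finset ℤ := Finset.Icc ⌈b*u+d-ε⌉ ⌊b*v+d+ε⌋ with hF
  have hsub : {x ∈ Icc u v | nint (b*x+d) < ε}
      ⊆ ⋃ n ∈ F, Ioo (((n:ℝ)-d-ε)/b) (((n:ℝ)-d+ε)/b) := by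
    rintro x ⟨⟨hx0, hx1⟩, hx⟩
    have habs : |b*x+d - round (b*x+d)| < ε := hx
    set n := round (b*x+d) with hn
    have h1 : (n:ℝ) - ε < b*x+d := by
      have := abs_lt.mp habs; linarith [this.1, this.2]
    have h2 : b*x+d < (n:ℝ) + ε := by
      have := abs_lt.mp habs; linarith [this.1, this.2]
    have hbu : b*u ≤ b*x := by nlinarith
    have hbv : b*x ≤ b*v := by nlinarith
    have hnF : n ∈ F := by
      simp only [hF, Finset.mem_Icc]
      exact ⟨Int.ceil_le.mpr (by linarith), Int.le_floor.mpr (by linarith)⟩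
    refine mem_biUnion hnF ?_
    constructor
    · rw [div_lt_iff₀ hb]; linarith
    · rw [lt_div_iff₀ hb]; linarith
  calc volume {x ∈ Icc u v | nint (b*x+d) < ε}
      ≤ volume (⋃ n ∈ F, Ioo (((n:ℝ)-d-ε)/b) (((n:ℝ)-d+ε)/b)) := measure_mono hsub
    _ ≤ ∑ n ∈ F, volume (Ioo (((n:ℝ)-d-ε)/b) (((n:ℝ)-d+ε)/b)) := measure_biUnion_finset_le _ _
    _ = ∑ n ∈ F, ENNReal.ofReal (2*ε/b) := by
        refine Finset.sum_congr rfl fun n _ => ?_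
        rw [Real.volume_Ioo]
        congr 1
        field_simp
        ring
    _ = F.card • ENNReal.ofReal (2*ε/b) := by rw [Finset.sum_const]
    _ ≤ ENNReal.ofReal ((b*(v-u)+2*ε+1) * (2*ε/b)) := by
        rw [nsmul_eq_mul, ← ENNReal.ofReal_natCast, ← ENNReal.ofReal_mul (by positivity)]
        apply ENNReal.ofReal_le_ofReal
        apply mul_le_mul_of_nonneg_right _ (by positivity)
        have hcard : (F.card : ℝ) ≤ b*(v-u)+2*ε+1 := by
          rw [hF, Int.card_Icc]
          have h1 : ((⌊b*v+d+ε⌋ + 1 - ⌈b*u+d-ε⌉).toNat : ℤ) = max (⌊b*v+d+ε⌋ + 1 - ⌈b*u+d-ε⌉) 0 :=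
            Int.toNat_eq_max _
          have h2 : ((⌊b*v+d+ε⌋ + 1 - ⌈b*u+d-ε⌉).toNat : ℝ) = ((max (⌊b*v+d+ε⌋ + 1 - ⌈b*u+d-ε⌉) 0 : ℤ) : ℝ) := by
            exact_mod_cast congrArg (Int.cast : ℤ → ℝ) h1
          rw [h2]
          rcases max_cases (⌊b*v+d+ε⌋ + 1 - ⌈b*u+d-ε⌉) 0 with ⟨heq, _⟩ | ⟨heq, _⟩ <;> rw [heq]
          · push_cast
            have := Int.floor_le (b*v+d+ε)
            have := Int.le_ceil (b*u+d-ε)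
            nlinarith
          · push_cast
            nlinarith
        exact hcard


lemma lemC (a c ε : ℝ) (ha : 1 ≤ a) (hε : 0 < ε) (hε1 : ε ≤ 1) :
    volume {x ∈ Icc (0:ℝ) 1 | nint (a*x+c) < ε} ≤ ENNReal.ofReal (8*ε) := by
  refine le_trans (lemA a c 0 1 ε (by linarith) hε (by norm_num)) ?_
  apply ENNReal.ofReal_le_ofReal
  have ha0 : (0:ℝ) < a := by linarith
  calc (a*(1-0)+2*ε+1) * (2*ε/a) = ((a+2*ε+1)/a)*(2*ε) := by ring
    _ ≤ 4*(2*ε) := mul_le_mul_of_nonneg_right ((div_le_iff₀ ha0).mpr (by nlinarith)) (by positivity)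
    _ = 8*ε := by ring



lemma lemB (a b c d ε₁ ε₂ : ℝ) (ha : 1 ≤ a) (hab : a ≤ b)
    (h1 : 0 < ε₁) (h1' : ε₁ ≤ 1) (h2 : 0 < ε₂) (h2' : ε₂ ≤ 1) :
    volume {x ∈ Icc (0:ℝ) 1 | nint (a*x+c) < ε₁ ∧ nint (b*x+d) < ε₂}
      ≤ ENNReal.ofReal (16*ε₁*ε₂ + 24*a*ε₂/b) := by
  have ha0 : (0:ℝ) < a := by linarith
  have hb0 : (0:ℝ) < b := by linarith
  set F : Finset ℤ := Finset.Icc ⌈c-ε₁⌉ ⌊a+c+ε₁⌋ with hF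
  have hsub : {x ∈ Icc (0:ℝ) 1 | nint (a*x+c) < ε₁ ∧ nint (b*x+d) < ε₂}
      ⊆ ⋃ n ∈ F, {x ∈ Icc (((n:ℝ)-c-ε₁)/a) (((n:ℝ)-c+ε₁)/a) | nint (b*x+d) < ε₂} := by
    rintro x ⟨⟨hx0, hx1⟩, hx, hx'⟩
    have habs : |a*x+c - round (a*x+c)| < ε₁ := hx
    set n := round (a*x+c) with hn
    obtain ⟨e1, e2⟩ := abs_lt.mp habs
    have hau : a*0 ≤ a*x := by nlinarith
    have hav : a*x ≤ a*1 := by nlinarith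
    have hnF : n ∈ F := by
      simp only [hF, Finset.mem_Icc]
      constructor
      · apply Int.ceil_le.mpr; nlinarith
      · apply Int.le_floor.mpr; nlinarith
    refine mem_biUnion hnF ⟨⟨?_, ?_⟩, hx'⟩
    · rw [div_le_iff₀ ha0]; nlinarith
    · rw [le_div_iff₀ ha0]; nlinarith
  have hcard : (F.card : ℝ) ≤ 4*a := by
    rw [hF, Int.card_Icc]
    have h1 : ((⌊a+c+ε₁⌋ + 1 - ⌈c-ε₁⌉).toNat : ℝ) = ((max (⌊a+c+ε₁⌋ + 1 - ⌈c-ε₁⌉) 0 : ℤ) : ℝ) := by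
      exact_mod_cast congrArg (Int.cast : ℤ → ℝ) (Int.toNat_eq_max _)
    rw [h1]
    rcases max_cases (⌊a+c+ε₁⌋ + 1 - ⌈c-ε₁⌉) 0 with ⟨heq, _⟩ | ⟨heq, _⟩ <;> rw [heq]
    · push_cast
      have := Int.floor_le (a+c+ε₁)
      have := Int.le_ceil (c-ε₁)
      nlinarith
    · push_cast; nlinarith
  calc volume {x ∈ Icc (0:ℝ) 1 | nint (a*x+c) < ε₁ ∧ nint (b*x+d) < ε₂}
      ≤ volume (⋃ n ∈ F, {x ∈ Icc (((n:ℝ)-c-ε₁)/a) (((n:ℝ)-c+ε₁)/a) | nint (b*x+d) < ε₂}) :=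
        measure_mono hsub
    _ ≤ ∑ n ∈ F, volume {x ∈ Icc (((n:ℝ)-c-ε₁)/a) (((n:ℝ)-c+ε₁)/a) | nint (b*x+d) < ε₂} :=
        measure_biUnion_finset_le _ _
    _ ≤ ∑ n ∈ F, ENNReal.ofReal ((b*(2*ε₁/a)+2*ε₂+1) * (2*ε₂/b)) := by
        apply Finset.sum_le_sum
        intro n _
        have huv : ((n:ℝ)-c-ε₁)/a ≤ ((n:ℝ)-c+ε₁)/a :=
          (div_le_div_iff_of_pos_right ha0).mpr (by linarith)
        have := lemA b d (((n:ℝ)-c-ε₁)/a) (((n:ℝ)-c+ε₁)/a) ε₂ hb0 h2 huv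
        refine this.trans (ENNReal.ofReal_le_ofReal ?_)
        apply mul_le_mul_of_nonneg_right _ (by positivity)
        have hlen2 : ((n:ℝ)-c+ε₁)/a - ((n:ℝ)-c-ε₁)/a = 2*ε₁/a := by field_simp; ring
        rw [hlen2]
    _ = F.card • ENNReal.ofReal ((b*(2*ε₁/a)+2*ε₂+1) * (2*ε₂/b)) := Finset.sum_const _
    _ ≤ ENNReal.ofReal (16*ε₁*ε₂ + 24*a*ε₂/b) := by
        rw [nsmul_eq_mul, ← ENNReal.ofReal_natCast, ← ENNReal.ofReal_mul (by positivity)]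
        apply ENNReal.ofReal_le_ofReal
        calc (F.card : ℝ) * ((b*(2*ε₁/a)+2*ε₂+1) * (2*ε₂/b))
            ≤ (4*a) * ((b*(2*ε₁/a)+2*ε₂+1) * (2*ε₂/b)) := by
              apply mul_le_mul_of_nonneg_right hcard (by positivity)
          _ ≤ 16*ε₁*ε₂ + 24*a*ε₂/b := by
              have key : (4*a) * ((b*(2*ε₁/a)+2*ε₂+1) * (2*ε₂/b))
                  = 16*ε₁*ε₂ + 8*a*ε₂*(2*ε₂+1)/b := by field_simp; ring
              rw [key]
              have : 8*a*ε₂*(2*ε₂+1)/b ≤ 24*a*ε₂/b :=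
                (div_le_div_iff_of_pos_right hb0).mpr (by nlinarith [mul_nonneg (mul_nonneg ha0.le h2.le) (by linarith : (0:ℝ) ≤ 1-ε₂)])
              linarith


set_option maxHeartbeats 2000000 in
theorem main (a b c d δ : ℝ) (ha : 1 ≤ a) (hab : a ≤ b) (hδ0 : 0 < δ) (hδ2 : δ ≤ 1 / 2) :
      volume {x ∈ Icc (0:ℝ) 1 | nint (a * x + c) * nint (b * x + d) < δ ^ 2}
        ≤ ENNReal.ofReal (200 * (δ ^ 2 * max 1 (clog b / a) * clog (1 / δ)
            + (a / b) ^ ((1:ℝ) / 2) * δ * max 1 (clog b / a))) := by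
  have ha0 : (0:ℝ) < a := by linarith
  have hb0 : (0:ℝ) < b := by linarith
  have hab0 : 0 < a/b := div_pos ha0 hb0
  have habl : a/b ≤ 1 := (div_le_one hb0).mpr hab
  set s := Real.sqrt (a/b) with hs
  have hs0 : 0 < s := Real.sqrt_pos.mpr hab0
  have hs1 : s ≤ 1 := by rw [hs, show (1:ℝ) = Real.sqrt 1 by simp]; exact Real.sqrt_le_sqrt habl
  have hs2 : s^2 = a/b := Real.sq_sqrt hab0.le
  set t := max δ s with ht
  have ht0 : 0 < t := lt_of_lt_of_le hδ0 (le_max_left _ _)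
  have htδ : δ ≤ t := le_max_left _ _
  have hts : s ≤ t := le_max_right _ _
  have ht1 : t ≤ 1 := max_le (by linarith) hs1
  set J := ⌊Real.logb 2 (1/(2*δ^2))⌋₊ with hJdef
  set cl := clog (1/δ) with hcl
  have hcl1 : (1:ℝ) ≤ cl := le_max_left _ _
  have hcllog : Real.log (1/δ) ≤ cl := le_max_right _ _
  set L := max 1 (clog b / a) with hL
  have hL1 : (1:ℝ) ≤ L := le_max_left _ _
  -- the cover
  set A := {x ∈ Icc (0:ℝ) 1 | nint (a*x+c) < δ*t} with hA
  set B : ℕ → Set ℝ := fun j => {x ∈ Icc (0:ℝ) 1 |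
      nint (a*x+c) < min (δ*t*2^(j+1)) 1 ∧ nint (b*x+d) < min (δ/(t*2^j)) 1} with hB
  have hX : 2 ≤ 1/(2*δ^2) := by
    rw [le_div_iff₀ (by positivity)]; nlinarith
  have hJb : (J:ℝ) + 1 ≤ 5 * cl := by
    have hfl : (J:ℝ) ≤ Real.logb 2 (1/(2*δ^2)) :=
      Nat.floor_le (Real.logb_nonneg one_lt_two (by linarith))
    have hlog2 : (1:ℝ)/2 ≤ Real.log 2 := by
      have := Real.log_two_gt_d9; linarith
    have hlogX0 : 0 ≤ Real.log (1/(2*δ^2)) := Real.log_nonneg (by linarith)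
    have hlogXle : Real.log (1/(2*δ^2)) ≤ 2 * Real.log (1/δ) := by
      have h1 : Real.log (1/(2*δ^2)) ≤ Real.log (1/δ^2) := by
        apply Real.log_le_log (by positivity)
        rw [div_le_div_iff₀ (by positivity) (by positivity)]; nlinarith
      have h2 : Real.log (1/δ^2) = 2 * Real.log (1/δ) := by
        rw [show (1:ℝ)/δ^2 = (1/δ)^2 by ring, Real.log_pow]; push_cast; ring
      linarith
    have hlogb : Real.logb 2 (1/(2*δ^2)) ≤ 4 * cl := by
      rw [Real.logb, div_le_iff₀ (by linarith : (0:ℝ) < Real.log 2)]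
      have hlog1δ : 0 ≤ Real.log (1/δ) := Real.log_nonneg (by rw [le_div_iff₀ hδ0]; linarith)
      nlinarith
    linarith
  have hcover : {x ∈ Icc (0:ℝ) 1 | nint (a * x + c) * nint (b * x + d) < δ ^ 2}
      ⊆ A ∪ ⋃ j ∈ Finset.range (J+1), B j := by
    rintro x ⟨hxI, hprod⟩
    set p := nint (a*x+c) with hp
    set q := nint (b*x+d) with hq
    have hp2 : p ≤ 1/2 := abs_sub_round (a*x+c)
    have hq2 : q ≤ 1/2 := abs_sub_round (b*x+d)
    have hp0 : 0 ≤ p := abs_nonneg _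
    have hq0 : 0 ≤ q := abs_nonneg _
    by_cases hAc : p < δ*t
    · exact Or.inl ⟨hxI, hAc⟩
    right
    have hpl : δ*t ≤ p := not_lt.mp hAc
    have hppos : 0 < p := lt_of_lt_of_le (by positivity) hpl
    obtain ⟨j, hj1, hj2⟩ : ∃ j : ℕ, p < δ*t*2^(j+1) ∧ δ*t*2^j ≤ p := by
      have hm1 : (1:ℝ) ≤ p/(δ*t) := (le_div_iff₀ (by positivity)).mpr (by linarith)
      have hm0 : 1 ≤ ⌊p/(δ*t)⌋₊ := Nat.le_floor (by exact_mod_cast hm1)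
      refine ⟨Nat.log 2 ⌊p/(δ*t)⌋₊, ?_, ?_⟩
      · have h2 : (⌊p/(δ*t)⌋₊:ℝ) + 1 ≤ (2:ℝ)^(Nat.log 2 ⌊p/(δ*t)⌋₊ + 1) := by
          exact_mod_cast Nat.succ_le_of_lt (Nat.lt_pow_succ_log_self (by norm_num) _)
        have h3 : p/(δ*t) < (⌊p/(δ*t)⌋₊:ℝ) + 1 := Nat.lt_floor_add_one _
        have h4 : p/(δ*t) < (2:ℝ)^(Nat.log 2 ⌊p/(δ*t)⌋₊ + 1) := lt_of_lt_of_le h3 h2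
        rw [div_lt_iff₀ (by positivity)] at h4; linarith
      · have h2 : (2:ℝ)^(Nat.log 2 ⌊p/(δ*t)⌋₊) ≤ (⌊p/(δ*t)⌋₊:ℝ) := by
          exact_mod_cast Nat.pow_log_le_self 2 (by omega)
        have h3 : (⌊p/(δ*t)⌋₊:ℝ) ≤ p/(δ*t) := Nat.floor_le (by positivity)
        have h4 : (2:ℝ)^(Nat.log 2 ⌊p/(δ*t)⌋₊) ≤ p/(δ*t) := h2.trans h3
        rw [le_div_iff₀ (by positivity)] at h4; linarith
    have hjJ : j ≤ J := by
      have h2j : (2:ℝ)^j ≤ 1/(2*δ^2) := by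
        have h2p : (0:ℝ) < 2^j := pow_pos (by norm_num) j
        have hδt : δ*δ*2^j ≤ δ*t*2^j :=
          mul_le_mul_of_nonneg_right (mul_le_mul_of_nonneg_left htδ hδ0.le) h2p.le
        have h5 : δ*t*2^j ≤ 1/2 := hj2.trans hp2
        have e : (2:ℝ)^j*(2*δ^2) = 2*(δ*δ*2^j) := by ring
        rw [le_div_iff₀ (by positivity), e]
        linarith
      have hjr : (j:ℝ) ≤ Real.logb 2 (1/(2*δ^2)) := by
        have h1 : Real.logb 2 ((2:ℝ)^j) ≤ Real.logb 2 (1/(2*δ^2)) :=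
          Real.logb_le_logb_of_le one_lt_two (by positivity) h2j
        rwa [Real.logb_pow, Real.logb_self_eq_one one_lt_two, mul_one] at h1
      exact Nat.le_floor hjr
    refine mem_biUnion (Finset.mem_range.mpr (Nat.lt_succ_of_le hjJ)) ⟨hxI, ?_, ?_⟩
    · exact lt_min hj1 (by linarith)
    · refine lt_min ?_ (by linarith)
      have hqlt : q < δ^2/p := by
        rw [lt_div_iff₀ hppos, mul_comm]; exact hprod
      have hstep : δ^2/p ≤ δ^2/(δ*t*2^j) :=
        div_le_div_of_nonneg_left (by positivity) (by positivity) hj2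
      have heq : δ^2/(δ*t*2^j) = δ/(t*2^j) := by
        field_simp
      linarith
  -- per-piece bounds
  have hδt1 : δ*t ≤ 1 := mul_le_one₀ (by linarith) ht0.le ht1
  have hvolA : volume A ≤ ENNReal.ofReal (8*(δ*t)) := lemC a c (δ*t) ha (by positivity) hδt1
  have hBj : ∀ j : ℕ, volume (B j) ≤ ENNReal.ofReal (32*δ^2 + 24*s*δ*(1/2:ℝ)^j) := by
    intro j
    have h2p : (0:ℝ) < 2^j := pow_pos (by norm_num) j
    have h10 : 0 < min (δ*t*2^(j+1)) 1 := lt_min (by positivity) one_pos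
    have h20 : 0 < min (δ/(t*2^j)) 1 := lt_min (by positivity) one_pos
    refine (lemB a b c d _ _ ha hab h10 (min_le_right _ _) h20 (min_le_right _ _)).trans
      (ENNReal.ofReal_le_ofReal ?_)
    have e1 : min (δ*t*2^(j+1)) 1 ≤ δ*t*2^(j+1) := min_le_left _ _
    have e2 : min (δ/(t*2^j)) 1 ≤ δ/(t*2^j) := min_le_left _ _
    have k1 : 16*(min (δ*t*2^(j+1)) 1)*(min (δ/(t*2^j)) 1) ≤ 32*δ^2 := by
      have hm : (min (δ*t*2^(j+1)) 1)*(min (δ/(t*2^j)) 1) ≤ (δ*t*2^(j+1))*(δ/(t*2^j)) :=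
        mul_le_mul e1 e2 h20.le (by positivity)
      have key : (δ*t*2^(j+1))*(δ/(t*2^j)) = 2*δ^2 := by
        rw [pow_succ]; field_simp
      rw [key] at hm
      have := mul_le_mul_of_nonneg_left hm (by norm_num : (0:ℝ) ≤ 16)
      linarith [this]
    have k2 : 24*a*(min (δ/(t*2^j)) 1)/b ≤ 24*s*δ*(1/2:ℝ)^j := by
      have c1 : 24*a*(min (δ/(t*2^j)) 1)/b ≤ 24*a*(δ/(t*2^j))/b :=
        (div_le_div_iff_of_pos_right hb0).mpr (mul_le_mul_of_nonneg_left e2 (by positivity))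
      have c2 : 24*a*(δ/(t*2^j))/b = 24*δ*((a/b)/t)*(1/2:ℝ)^j := by
        rw [div_pow, one_pow]
        field_simp
      have c3 : (a/b)/t ≤ s := by
        rw [div_le_iff₀ ht0]
        nlinarith [hs2, hts, hs0]
      calc 24*a*(min (δ/(t*2^j)) 1)/b ≤ 24*δ*((a/b)/t)*(1/2:ℝ)^j := by rw [← c2]; exact c1
        _ ≤ 24*δ*s*(1/2:ℝ)^j := by
            apply mul_le_mul_of_nonneg_right _ (by positivity)
            exact mul_le_mul_of_nonneg_left c3 (by positivity)
        _ = 24*s*δ*(1/2:ℝ)^j := by ring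
    linarith
  have hsum : ∑ j ∈ Finset.range (J+1), ENNReal.ofReal (32*δ^2 + 24*s*δ*(1/2:ℝ)^j)
      ≤ ENNReal.ofReal (32*δ^2*((J:ℝ)+1) + 48*s*δ) := by
    rw [← ENNReal.ofReal_sum_of_nonneg (fun j _ => by positivity)]
    apply ENNReal.ofReal_le_ofReal
    rw [Finset.sum_add_distrib, Finset.sum_const, ← Finset.mul_sum, Finset.card_range,
      nsmul_eq_mul]
    have hg : ∑ j ∈ Finset.range (J+1), (1/2:ℝ)^j ≤ 2 := sum_geometric_two_le _
    have h24 : 24*s*δ*(∑ j ∈ Finset.range (J+1), (1/2:ℝ)^j) ≤ 24*s*δ*2 :=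
      mul_le_mul_of_nonneg_left hg (by positivity)
    push_cast
    nlinarith [h24]
  have hcl0 : (0:ℝ) ≤ cl := by linarith
  have hfinal : 8*(δ*t) + (32*δ^2*((J:ℝ)+1) + 48*s*δ)
      ≤ 200*(δ^2*L*cl + (a/b)^((1:ℝ)/2)*δ*L) := by
    have hrw : (a/b)^((1:ℝ)/2) = s := by
      rw [hs, Real.sqrt_eq_rpow]
    rw [hrw]
    have ht' : t ≤ δ + s := max_le (by linarith) (by linarith)
    have l1 : 8*(δ*t) ≤ 8*δ*δ + 8*δ*s := by
      nlinarith [mul_le_mul_of_nonneg_left ht' (by positivity : (0:ℝ) ≤ 8*δ)]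
    have l2 : 32*δ^2*((J:ℝ)+1) ≤ 160*δ^2*cl := by
      nlinarith [mul_le_mul_of_nonneg_left hJb (by positivity : (0:ℝ) ≤ 32*δ^2)]
    nlinarith [l1, l2,
      mul_nonneg (mul_nonneg hδ0.le hδ0.le) (sub_nonneg.mpr hcl1),
      mul_nonneg (mul_nonneg (mul_nonneg hδ0.le hδ0.le) hcl0) (sub_nonneg.mpr hL1),
      mul_nonneg (mul_nonneg hs0.le hδ0.le) (sub_nonneg.mpr hL1),
      mul_nonneg hs0.le hδ0.le]
  calc volume {x ∈ Icc (0:ℝ) 1 | nint (a * x + c) * nint (b * x + d) < δ ^ 2}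
      ≤ volume (A ∪ ⋃ j ∈ Finset.range (J+1), B j) := measure_mono hcover
    _ ≤ volume A + volume (⋃ j ∈ Finset.range (J+1), B j) := measure_union_le _ _
    _ ≤ ENNReal.ofReal (8*(δ*t)) + ∑ j ∈ Finset.range (J+1), volume (B j) :=
        add_le_add hvolA (measure_biUnion_finset_le _ _)
    _ ≤ ENNReal.ofReal (8*(δ*t)) + ENNReal.ofReal (32*δ^2*((J:ℝ)+1) + 48*s*δ) := by
        refine add_le_add le_rfl ((Finset.sum_le_sum fun j _ => hBj j).trans hsum)
    _ = ENNReal.ofReal (8*(δ*t) + (32*δ^2*((J:ℝ)+1) + 48*s*δ)) := by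
        rw [← ENNReal.ofReal_add (by positivity) (by positivity)]
    _ ≤ ENNReal.ofReal (200 * (δ ^ 2 * L * cl + (a/b)^((1:ℝ)/2)*δ*L)) :=
        ENNReal.ofReal_le_ofReal hfinal


theorem stmt4 :
    ∃ C : ℝ, 0 < C ∧ ∀ (a b c d δ : ℝ), 1 ≤ a → a ≤ b → 0 < δ → δ ≤ 1 / 2 →
      volume {x ∈ Icc (0:ℝ) 1 | nint (a * x + c) * nint (b * x + d) < δ ^ 2}
        ≤ ENNReal.ofReal (C * (δ ^ 2 * max 1 (clog b / a) * clog (1 / δ)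
            + (a / b) ^ ((1:ℝ) / 2) * δ * max 1 (clog b / a))) := by
  exact ⟨200, by norm_num, main⟩
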